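/- Soundness with respect to the inductive characterization of regular semantics: for every logic program with coclauses (P,coP), every finite set H of finite atoms, every goal ⟨A1,...,An | E⟩ with Var(H) ⊆ Var(E), if P;coP ⊢ H : ⟨A1,...,An | E⟩ ⇒ E' is derivable, then for every σ ∈ sol(E') and every i ∈ {1,...,n}, the judgment (Hσ ⊢ Aiσ) belongs to the inductive interpretation of Loop(P,coP). -/

import Mathlib

/- Framework: flexible coinductive logic programming (logic programs with coclauses).
   Terms are possibly infinite trees, modelled as M-types of a polynomial functor. -/

namespace FlexLP

/-- A first-order signature: function symbols and predicate symbols, each with an arity.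
Variables are represented by natural numbers (a countably infinite set). -/
structure Sig where
  Func : Type
  far : Func → ℕ
  Pred : Type
  par : Pred → ℕ

/-- Polynomial functor whose M-type is the type of possibly infinite terms:
nodes are labelled by function symbols (with `far` children) or variables (no children). -/
def TermP (S : Sig) : PFunctor :=
  ⟨S.Func ⊕ ℕ, fun l => Fin (match l with | Sum.inl f => S.far f | Sum.inr _ => 0)⟩

/-- Possibly infinite terms over the signature `S`. -/
def Term (S : Sig) : Type := (TermP S).M

/-- The term consisting of a single variable `x`. -/
def Term.var (S : Sig) (x : ℕ) : Term S :=
  PFunctor.M.mk ⟨Sum.inr x, fun i => i.elim0⟩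

/-- The variable `x` occurs in the term `t`. -/
inductive Term.Occurs (S : Sig) (x : ℕ) : Term S → Prop
  | root (t : Term S) (h : (PFunctor.M.dest t).1 = Sum.inr x) : Term.Occurs S x t
  | child (t : Term S) (i : (TermP S).B (PFunctor.M.dest t).1)
      (h : Term.Occurs S x ((PFunctor.M.dest t).2 i)) : Term.Occurs S x t

/-- The term `t` is finite (syntactic): all its branches are finite. -/
inductive Term.IsFinite (S : Sig) : Term S → Prop
  | mk (t : Term S) (h : ∀ i, Term.IsFinite S ((PFunctor.M.dest t).2 i)) : Term.IsFinite S t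

/-- The term `t` is ground: no variable occurs in it. -/
def Term.Ground (S : Sig) (t : Term S) : Prop := ∀ x, ¬ Term.Occurs S x t

/-- A substitution: a map from a finite set of variables to terms. -/
structure Subst (S : Sig) where
  toFun : ℕ → Option (Term S)
  finDom : {x | (toFun x).isSome}.Finite

/-- Domain of a substitution. -/
def Subst.dom {S : Sig} (σ : Subst S) : Set ℕ := {x | (σ.toFun x).isSome}

/-- A substitution is ground if all its values are ground terms. -/
def Subst.Ground {S : Sig} (σ : Subst S) : Prop :=
  ∀ x t, σ.toFun x = some t → Term.Ground S t

/-- `σ ⊑ θ` : `dom σ ⊆ dom θ` and the two substitutions agree on `dom σ`. -/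
def Subst.le {S : Sig} (σ θ : Subst S) : Prop :=
  ∀ x t, σ.toFun x = some t → θ.toFun x = some t

/-- One step of (simultaneous) substitution application, as a coalgebra.
The boolean flag records whether we are still in the original term (`true`)
or inside a substituted term (`false`). -/
def substStep (S : Sig) (σ : Subst S) : Term S × Bool → (TermP S).Obj (Term S × Bool) :=
  fun p =>
    match PFunctor.M.dest p.1, p.2 with
    | ⟨Sum.inl f, ch⟩, b => ⟨Sum.inl f, fun i => (ch i, b)⟩
    | ⟨Sum.inr x, ch⟩, true =>
        match σ.toFun x with
        | some s =>
            match PFunctor.M.dest s with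
            | ⟨l, ch'⟩ => ⟨l, fun i => (ch' i, false)⟩
        | none => ⟨Sum.inr x, fun i => (ch i, true)⟩
    | ⟨Sum.inr x, ch⟩, false => ⟨Sum.inr x, fun i => (ch i, false)⟩

/-- Application `tσ` of a substitution to a term. -/
def Term.subst {S : Sig} (t : Term S) (σ : Subst S) : Term S :=
  PFunctor.M.corec (substStep S σ) (t, true)

/-- Atoms: a predicate symbol applied to terms (a possibly infinite tree whose
root is labelled by a predicate symbol). -/
structure Atom (S : Sig) where
  pred : S.Pred
  args : Fin (S.par pred) → Term S

/-- The variable `x` occurs in the atom `A`. -/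
def Atom.Occurs {S : Sig} (x : ℕ) (A : Atom S) : Prop := ∃ i, Term.Occurs S x (A.args i)

/-- Ground atoms. The set of all ground atoms is the complete Herbrand base. -/
def Atom.Ground {S : Sig} (A : Atom S) : Prop := ∀ i, Term.Ground S (A.args i)

/-- Finite (syntactic) atoms. -/
def Atom.IsFinite {S : Sig} (A : Atom S) : Prop := ∀ i, Term.IsFinite S (A.args i)

/-- Application of a substitution to an atom. -/
def Atom.subst {S : Sig} (A : Atom S) (σ : Subst S) : Atom S :=
  ⟨A.pred, fun i => Term.subst (A.args i) σ⟩

/-- A (definite) clause `head :- body`, made of finite atoms. -/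
structure Clause (S : Sig) where
  head : Atom S
  body : List (Atom S)
  finHead : head.IsFinite
  finBody : ∀ B ∈ body, B.IsFinite

/-- Variables occurring in a clause. -/
def clauseVars {S : Sig} (C : Clause S) : Set ℕ :=
  {x | Atom.Occurs x C.head ∨ ∃ B ∈ C.body, Atom.Occurs x B}

/-- `Ground P` : the ground instances of clauses of `P`, viewed as inference rules
(pairs premises/conclusion) on the complete Herbrand base. -/
def GroundInst {S : Sig} (P : Set (Clause S)) : Set (Atom S × List (Atom S)) :=
  {r | ∃ C ∈ P, ∃ σ : Subst S, σ.Ground ∧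
        r.1 = C.head.subst σ ∧ r.2 = C.body.map (fun B => B.subst σ) ∧
        r.1.Ground ∧ ∀ B ∈ r.2, B.Ground}

/-- The (one step) inference operator `T_P` associated to a program. -/
def TP {S : Sig} (P : Set (Clause S)) (I : Set (Atom S)) : Set (Atom S) :=
  {A | ∃ r ∈ GroundInst P, r.1 = A ∧ ∀ B ∈ r.2, B ∈ I}

/-- `I` is a model of `P`. -/
def IsModel {S : Sig} (P : Set (Clause S)) (I : Set (Atom S)) : Prop := TP P I ⊆ I

/-- `I` is a comodel of `P`. -/
def IsComodel {S : Sig} (P : Set (Clause S)) (I : Set (Atom S)) : Prop := I ⊆ TP P I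

/-- `Ind P` : the inductive declarative semantics, i.e. the least model of `P`. -/
def Ind {S : Sig} (P : Set (Clause S)) : Set (Atom S) := ⋂₀ {I | IsModel P I}

/-- `FlexCo (P,coP)` : the declarative semantics of a logic program with coclauses,
i.e. the largest comodel of `P` included in `Ind (P ∪ coP)` (union of all such comodels). -/
def FlexCo {S : Sig} (P coP : Set (Clause S)) : Set (Atom S) :=
  ⋃₀ {I | IsComodel P I ∧ I ⊆ Ind (P ∪ coP)}

/-- `FlexReg (P,coP)` : the regular declarative semantics, i.e. the union of all
finite comodels of `P` included in `Ind (P ∪ coP)`. -/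
def FlexReg {S : Sig} (P coP : Set (Clause S)) : Set (Atom S) :=
  ⋃₀ {I | I.Finite ∧ IsComodel P I ∧ I ⊆ Ind (P ∪ coP)}

/-- An equation `s ≐ t` between terms. -/
abbrev Eqn (S : Sig) := Term S × Term S

/-- Variables occurring in a set of equations. -/
def eqnVars {S : Sig} (E : Set (Eqn S)) : Set ℕ :=
  {x | ∃ e ∈ E, Term.Occurs S x e.1 ∨ Term.Occurs S x e.2}

/-- `E` is a finite set of equations between finite (syntactic) terms. -/
def EqnSetFin {S : Sig} (E : Set (Eqn S)) : Prop :=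
  E.Finite ∧ ∀ e ∈ E, Term.IsFinite S e.1 ∧ Term.IsFinite S e.2

/-- `sol E` : the set of solutions of `E`, i.e. ground substitutions defined on all
variables of `E` that unify all the equations in `E`. -/
def sol {S : Sig} (E : Set (Eqn S)) : Set (Subst S) :=
  {σ | σ.Ground ∧ eqnVars E ⊆ σ.dom ∧ ∀ e ∈ E, e.1.subst σ = e.2.subst σ}

/-- `E` is solvable. -/
def Solvable {S : Sig} (E : Set (Eqn S)) : Prop := (sol E).Nonempty

/-- `eqs(A,B)` : the equations between the corresponding arguments of two atoms
with the same predicate symbol. -/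
def atomEqs {S : Sig} (A B : Atom S) : Set (Eqn S) :=
  {e | ∃ (h : A.pred = B.pred) (i : Fin (S.par A.pred)),
        e = (A.args i, B.args (Fin.cast (congrArg S.par h) i))}

/-- Variables occurring in a set of atoms. -/
def atomsVars {S : Sig} (H : Set (Atom S)) : Set ℕ := {x | ∃ A ∈ H, Atom.Occurs x A}

/-- Variables occurring in a sequence of atoms (a goal). -/
def goalVars {S : Sig} (G : List (Atom S)) : Set ℕ := {x | ∃ A ∈ G, Atom.Occurs x A}

/-- `ρ` is a renaming of the variables of clause `C` to fresh variables avoiding `avoid`: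
it maps (injectively) every variable of `C` to a variable not in `avoid`. -/
def FreshRenamingFor {S : Sig} (ρ : Subst S) (C : Clause S) (avoid : Set ℕ) : Prop :=
  (∀ x t, ρ.toFun x = some t → ∃ y, t = Term.var S y ∧ y ∉ avoid) ∧
  clauseVars C ⊆ ρ.dom ∧
  (∀ x y, ρ.toFun x = ρ.toFun y → (ρ.toFun x).isSome → x = y)

/-- The big-step operational semantics judgment `P;coP ⊢ H : ⟨G | E⟩ ⇒ E'` of
flexible coSLD resolution, inductively defined by the rules (empty), (co-hyp), (step). -/
inductive OpSem (S : Sig) :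
    Set (Clause S) → Set (Clause S) → Set (Atom S) → List (Atom S) →
      Set (Eqn S) → Set (Eqn S) → Prop
  | empty (P coP : Set (Clause S)) (H : Set (Atom S)) (E : Set (Eqn S)) :
      OpSem S P coP H [] E E
  | cohyp {P coP : Set (Clause S)} {H : Set (Atom S)} {G1 G2 : List (Atom S)}
      {A B : Atom S} {E1 E2 E3 : Set (Eqn S)} :
      coP ≠ ∅ → B ∈ H → A.pred = B.pred →
      Solvable (E1 ∪ atomEqs A B) →
      OpSem S (P ∪ coP) ∅ ∅ [A] (E1 ∪ atomEqs A B) E2 →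
      OpSem S P coP H (G1 ++ G2) E2 E3 →
      OpSem S P coP H (G1 ++ A :: G2) E1 E3
  | step {P coP : Set (Clause S)} {H : Set (Atom S)} {G1 G2 : List (Atom S)}
      {A : Atom S} {E1 E2 E3 : Set (Eqn S)} (C : Clause S) (ρ : Subst S) :
      C ∈ P →
      FreshRenamingFor ρ C (eqnVars E1 ∪ atomsVars H ∪ goalVars (G1 ++ A :: G2)) →
      A.pred = C.head.pred →
      Solvable (E1 ∪ atomEqs A (C.head.subst ρ)) →
      OpSem S P coP (H ∪ {A}) (C.body.map (fun B => B.subst ρ))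
        (E1 ∪ atomEqs A (C.head.subst ρ)) E2 →
      OpSem S P coP H (G1 ++ G2) E2 E3 →
      OpSem S P coP H (G1 ++ A :: G2) E1 E3

/-- `Ans(G,E,I)` : the set of answers to the goal `⟨G | E⟩` correct in the
interpretation `I`. -/
def Ans {S : Sig} (G : List (Atom S)) (E : Set (Eqn S)) (I : Set (Atom S)) :
    Set (Subst S) :=
  {σ | σ ∈ sol E ∧ goalVars G ⊆ σ.dom ∧ ∀ A ∈ G, A.subst σ ∈ I}

/-- The inductive interpretation of the inference system `Loop(P,coP)`, whose judgments
`H ⊢ A` pair a ground atom with a set of ground atoms (circular hypotheses);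
rules: (hp) `H ⊢ A` if `A ∈ H` and `A ∈ Ind (P ∪ coP)`;
(rule) from `H∪{A} ⊢ B` for every premise `B` of a ground instance of a clause of `P`
with conclusion `A`, infer `H ⊢ A`. -/
inductive LoopInd {S : Sig} (P coP : Set (Clause S)) : Set (Atom S) → Atom S → Prop
  | hp {H : Set (Atom S)} {A : Atom S} :
      A ∈ H → A ∈ Ind (P ∪ coP) → LoopInd P coP H A
  | rule {H : Set (Atom S)} {A : Atom S} (r : Atom S × List (Atom S)) :
      r ∈ GroundInst P → r.1 = A →
      (∀ B ∈ r.2, LoopInd P coP (H ∪ {A}) B) →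
      LoopInd P coP H A


section
variable {S : FlexLP.Sig}
open FlexLP PFunctor

lemma substStep_inl {σ : Subst S} {t : Term S} {f : S.Func} {ch} (e : M.dest t = ⟨Sum.inl f, ch⟩) (b : Bool) :
    substStep S σ (t, b) = ⟨Sum.inl f, fun i => (ch i, b)⟩ := by
  simp only [substStep, e]; rfl

lemma substStep_false {σ : Subst S} {t : Term S} {l} {ch} (e : M.dest t = ⟨l, ch⟩) :
    substStep S σ (t, false) = ⟨l, fun i => (ch i, false)⟩ := by
  simp only [substStep, e]; cases l <;> rfl

lemma substStep_var_none {σ : Subst S} {t : Term S} {x : ℕ} {ch} (e : M.dest t = ⟨Sum.inr x, ch⟩)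
    (hs : σ.toFun x = none) :
    substStep S σ (t, true) = ⟨Sum.inr x, fun i => (ch i, true)⟩ := by
  simp only [substStep, e, hs]; rfl

lemma substStep_var_some {σ : Subst S} {t : Term S} {x : ℕ} {ch} (e : M.dest t = ⟨Sum.inr x, ch⟩)
    {s l chs} (hs : σ.toFun x = some s) (hds : M.dest s = ⟨l, chs⟩) :
    substStep S σ (t, true) = ⟨l, fun i => (chs i, false)⟩ := by
  simp only [substStep, e, hs, hds]; rfl

lemma subst_false (σ : Subst S) (s : Term S) : M.corec (substStep S σ) (s, false) = s := by
  apply M.bisim (fun a b => a = M.corec (substStep S σ) (b, false))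
  · intro a b hab
    rcases e : M.dest b with ⟨l, ch⟩
    have h1 : M.dest a = ⟨l, fun i => M.corec (substStep S σ) (ch i, false)⟩ := by
      rw [hab, M.dest_corec, substStep_false e, PFunctor.map_eq]; rfl
    exact ⟨l, _, ch, h1, rfl, fun i => rfl⟩
  · rfl

lemma dest_subst_inl {σ : Subst S} {t : Term S} {f : S.Func} {ch} (e : M.dest t = ⟨Sum.inl f, ch⟩) :
    M.dest (Term.subst t σ) = ⟨Sum.inl f, fun i => Term.subst (ch i) σ⟩ := by
  rw [Term.subst, M.dest_corec, substStep_inl e]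
  rfl

lemma dest_inr_eq_var {t : Term S} {x : ℕ} {ch} (e : M.dest t = ⟨Sum.inr x, ch⟩) :
    t = Term.var S x := by
  rw [← M.mk_dest t, e, Term.var]
  exact congrArg M.mk (congrArg (Sigma.mk _) (funext fun i => i.elim0))

lemma dest_subst_var {σ : Subst S} {t : Term S} {x : ℕ} {ch} (e : M.dest t = ⟨Sum.inr x, ch⟩) :
    Term.subst t σ = (σ.toFun x).getD (Term.var S x) := by
  rcases hs : σ.toFun x with _ | s
  · have hd : M.dest (Term.subst t σ) = ⟨Sum.inr x, fun i => M.corec (substStep S σ) (ch i, true)⟩ := by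
      rw [Term.subst, M.dest_corec, substStep_var_none e hs]; rfl
    simpa using dest_inr_eq_var hd
  · rcases hds : M.dest s with ⟨l, chs⟩
    have hd : M.dest (Term.subst t σ) = ⟨l, chs⟩ := by
      rw [Term.subst, M.dest_corec, substStep_var_some e hs hds, PFunctor.map_eq]
      show Sigma.mk _ _ = _
      congr 1; funext i; exact subst_false σ _
    simp only [hs, Option.getD_some]
    rw [← M.mk_dest (Term.subst t σ), hd, ← hds]; exact M.mk_dest s
end
section
variable {S : FlexLP.Sig}
open FlexLP PFunctor

lemma occurs_of_dest {x : ℕ} {u : Term S} {l} {ch} (e : M.dest u = ⟨l, ch⟩)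
    (i : (TermP S).B l) (h : Term.Occurs S x (ch i)) : Term.Occurs S x u := by
  have key : ∀ (p : (TermP S).Obj (Term S)), M.dest u = p →
      ∀ i : (TermP S).B p.1, Term.Occurs S x (p.2 i) → Term.Occurs S x u := by
    rintro p rfl i h
    exact Term.Occurs.child u i h
  exact key ⟨l, ch⟩ e i h

lemma dest_var (x : ℕ) : M.dest (Term.var S x) = ⟨Sum.inr x, fun i => i.elim0⟩ := by
  rw [Term.var]; exact M.dest_mk _

lemma occurs_var_self (x : ℕ) : Term.Occurs S x (Term.var S x) := by
  exact Term.Occurs.root _ (by rw [dest_var])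

lemma occurs_var {x y : ℕ} (h : Term.Occurs S x (Term.var S y)) : x = y := by
  cases h with
  | root t hd => rw [dest_var] at hd; exact (Sum.inr.inj hd).symm
  | child t i h =>
      have hb : ((TermP S).B (M.dest (Term.var S y)).1) = Fin 0 := by rw [dest_var]; rfl
      exact (cast hb i).elim0

lemma subst_var (σ : Subst S) (x : ℕ) :
    Term.subst (Term.var S x) σ = (σ.toFun x).getD (Term.var S x) :=
  dest_subst_var (dest_var x)

lemma occurs_subst_of_var {ρ : Subst S} {x y : ℕ} {t : Term S} (h : Term.Occurs S x t)
    (hρ : ρ.toFun x = some (Term.var S y)) : Term.Occurs S y (Term.subst t ρ) := by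
  induction h with
  | root t hd =>
      rcases e : M.dest t with ⟨l, ch⟩
      rw [e] at hd
      subst hd
      rw [dest_subst_var e, hρ]
      exact occurs_var_self y
  | child t i h IH =>
      rcases e : M.dest t with ⟨l, ch⟩
      revert i
      rw [e]
      intro i h IH
      cases l with
      | inl f => exact occurs_of_dest (dest_subst_inl e) i IH
      | inr z => exact i.elim0

lemma occurs_subst_inv {σ : Subst S} {y : ℕ} {u : Term S} (h : Term.Occurs S y u) :
    ∀ t, u = Term.subst t σ →
      (∃ x, Term.Occurs S x t ∧ σ.toFun x = none ∧ y = x) ∨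
      (∃ x s, Term.Occurs S x t ∧ σ.toFun x = some s ∧ Term.Occurs S y s) := by
  induction h with
  | root u hd =>
      intro t hu
      rcases e : M.dest t with ⟨l, ch⟩
      cases l with
      | inl f =>
          rw [hu, dest_subst_inl e] at hd
          exact absurd hd (by simp)
      | inr x =>
          rcases hs : σ.toFun x with _ | s
          · left
            have hu' : u = Term.var S x := by rw [hu, dest_subst_var e, hs]; rfl
            rw [hu', dest_var] at hd
            exact ⟨x, Term.Occurs.root t (by rw [e]), hs, (Sum.inr.inj hd).symm⟩
          · right
            have hu' : u = s := by rw [hu, dest_subst_var e, hs]; rfl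
            rw [hu'] at hd
            exact ⟨x, s, Term.Occurs.root t (by rw [e]), hs, Term.Occurs.root s hd⟩
  | child u i h IH =>
      intro t hu
      rcases e : M.dest t with ⟨l, ch⟩
      cases l with
      | inl f =>
          have ed : M.dest u = ⟨Sum.inl f, fun j => Term.subst (ch j) σ⟩ := by
            rw [hu]; exact dest_subst_inl e
          revert i
          rw [ed]
          intro i h IH
          rcases IH (ch i) rfl with ⟨x, hx, h1, h2⟩ | ⟨x, s, hx, h1, h2⟩
          · exact Or.inl ⟨x, occurs_of_dest e i hx, h1, h2⟩
          · exact Or.inr ⟨x, s, occurs_of_dest e i hx, h1, h2⟩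
      | inr x =>
          rcases hs : σ.toFun x with _ | s
          · have hu' : u = Term.var S x := by rw [hu, dest_subst_var e, hs]; rfl
            have ed : M.dest u = ⟨Sum.inr x, fun i => i.elim0⟩ := by rw [hu', dest_var]
            revert i
            rw [ed]
            intro i h IH
            exact i.elim0
          · have hu' : u = s := by rw [hu, dest_subst_var e, hs]; rfl
            exact Or.inr ⟨x, s, Term.Occurs.root t (by rw [e]), hs,
              hu' ▸ Term.Occurs.child u i h⟩

lemma ground_subst {σ : Subst S} (hg : σ.Ground) {t : Term S}
    (hd : ∀ x, Term.Occurs S x t → x ∈ σ.dom) : Term.Ground S (Term.subst t σ) := by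
  intro y hy
  rcases occurs_subst_inv hy t rfl with ⟨x, hx, h1, rfl⟩ | ⟨x, s, hx, h1, h2⟩
  · have := hd _ hx
    simp [Subst.dom, h1] at this
  · exact hg x s h1 y h2
end
section
variable {S : FlexLP.Sig}
open FlexLP PFunctor

open Classical in
noncomputable def substCompAux (ρ σ : Subst S) : Subst S where
  toFun x := match ρ.toFun x with
    | some s => if Term.Ground S (Term.subst s σ) then some (Term.subst s σ) else none
    | none => none
  finDom := ρ.finDom.subset (by
    intro x hx
    simp only [Set.mem_setOf_eq] at hx ⊢
    rcases h : ρ.toFun x with _ | s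
    · rw [h] at hx; simp at hx
    · simp [h])

lemma substComp_ground (ρ σ : Subst S) : (substCompAux ρ σ).Ground := by
  intro x t h
  simp only [substCompAux] at h
  rcases hρ : ρ.toFun x with _ | s <;> rw [hρ] at h
  · simp at h
  · by_cases hg : Term.Ground S (Term.subst s σ)
    · simp only [hg, if_true, Option.some.injEq] at h
      exact h ▸ hg
    · simp [hg] at h

lemma substComp_some {ρ σ : Subst S} {x : ℕ} {s : FlexLP.Term S} (h : ρ.toFun x = some s)
    (hg : Term.Ground S (Term.subst s σ)) :
    (substCompAux ρ σ).toFun x = some (Term.subst s σ) := by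
  simp [substCompAux, h, hg]

lemma subst_subst {ρ θ σ : Subst S} {t : Term S} (hfin : Term.IsFinite S t)
    (hcov : ∀ x, Term.Occurs S x t →
      ∃ s, ρ.toFun x = some s ∧ θ.toFun x = some (Term.subst s σ)) :
    Term.subst (Term.subst t ρ) σ = Term.subst t θ := by
  induction hfin with
  | mk t hf IH =>
    rcases e : M.dest t with ⟨l, ch⟩
    rw [e] at IH
    cases l with
    | inl f =>
        have e1 : M.dest (Term.subst (Term.subst t ρ) σ)
            = ⟨Sum.inl f, fun i => Term.subst (Term.subst (ch i) ρ) σ⟩ :=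
          dest_subst_inl (dest_subst_inl e)
        have e2 : M.dest (Term.subst t θ) = ⟨Sum.inl f, fun i => Term.subst (ch i) θ⟩ :=
          dest_subst_inl e
        rw [← M.mk_dest (Term.subst (Term.subst t ρ) σ), ← M.mk_dest (Term.subst t θ), e1, e2]
        refine congrArg M.mk (congrArg (Sigma.mk _) (funext fun i => ?_))
        exact IH i fun x hx => hcov x (occurs_of_dest e i hx)
    | inr z =>
        obtain ⟨s, hρ, hθ⟩ := hcov z (Term.Occurs.root t (by rw [e]))
        rw [dest_subst_var e, hρ, Option.getD_some, dest_subst_var e, hθ, Option.getD_some]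

lemma atom_subst_pred (A : Atom S) (σ : Subst S) : (A.subst σ).pred = A.pred := rfl

lemma atom_eq_of {A B : Atom S} (hp : A.pred = B.pred)
    (hargs : ∀ i, A.args i = B.args (Fin.cast (congrArg S.par hp) i)) : A = B := by
  obtain ⟨p, f⟩ := A
  obtain ⟨q, g⟩ := B
  dsimp at hp
  subst hp
  refine congrArg _ (funext fun i => ?_)
  simpa using hargs i

lemma atom_subst_subst {A : Atom S} (hfin : A.IsFinite) {ρ θ σ : Subst S}
    (hcov : ∀ x, Atom.Occurs x A →
      ∃ s, ρ.toFun x = some s ∧ θ.toFun x = some (Term.subst s σ)) :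
    (A.subst ρ).subst σ = A.subst θ := by
  refine atom_eq_of (A := (A.subst ρ).subst σ) (B := A.subst θ) rfl fun i => ?_
  show Term.subst (Term.subst (A.args i) ρ) σ = Term.subst (A.args _) θ
  have : (Fin.cast (congrArg S.par (rfl : ((A.subst ρ).subst σ).pred = (A.subst θ).pred)) i) = i := by
    apply Fin.ext; rfl
  exact subst_subst (hfin i) fun x hx => hcov x ⟨i, hx⟩
end
section
variable {S : FlexLP.Sig}
open FlexLP PFunctor

lemma eqnVars_mono {E E' : Set (Eqn S)} (h : E ⊆ E') : eqnVars E ⊆ eqnVars E' := by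
  rintro x ⟨e, he, hx⟩
  exact ⟨e, h he, hx⟩

lemma sol_mono {E E' : Set (Eqn S)} (h : E ⊆ E') : sol E' ⊆ sol E := by
  rintro σ ⟨hg, hdom, hs⟩
  exact ⟨hg, (eqnVars_mono h).trans hdom, fun e he => hs e (h he)⟩

lemma subst_eq_of_sol {A B : Atom S} (hp : A.pred = B.pred) {σ : Subst S}
    (hs : σ ∈ sol (atomEqs A B)) : A.subst σ = B.subst σ := by
  refine atom_eq_of (A := A.subst σ) (B := B.subst σ) hp fun i => ?_
  exact hs.2.2 (A.args i, B.args (Fin.cast (congrArg S.par hp) i)) ⟨hp, i, rfl⟩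

lemma occurs_eqnVars_left {A B : Atom S} (hp : A.pred = B.pred) {x : ℕ}
    (h : Atom.Occurs x A) : x ∈ eqnVars (atomEqs A B) := by
  obtain ⟨i, hi⟩ := h
  exact ⟨(A.args i, B.args (Fin.cast (congrArg S.par hp) i)), ⟨hp, i, rfl⟩, Or.inl hi⟩

lemma occurs_eqnVars_right {A B : Atom S} (hp : A.pred = B.pred) {y : ℕ}
    (h : Atom.Occurs y B) : y ∈ eqnVars (atomEqs A B) := by
  obtain ⟨j, hj⟩ := h
  refine ⟨(A.args (Fin.cast (congrArg S.par hp.symm) j),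
    B.args (Fin.cast (congrArg S.par hp) (Fin.cast (congrArg S.par hp.symm) j))),
    ⟨hp, _, rfl⟩, Or.inr ?_⟩
  have : (Fin.cast (congrArg S.par hp) (Fin.cast (congrArg S.par hp.symm) j)) = j := by
    apply Fin.ext; rfl
  rw [this]
  exact hj

lemma opsem_sub {P coP : Set (Clause S)} {H : Set (Atom S)} {G : List (Atom S)}
    {E E' : Set (Eqn S)} (h : OpSem S P coP H G E E') : E ⊆ E' := by
  induction h with
  | empty => exact subset_rfl
  | cohyp _ _ _ _ _ _ IH1 IH2 => exact (Set.subset_union_left.trans IH1).trans IH2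
  | step _ _ _ _ _ _ _ _ IH1 IH2 => exact (Set.subset_union_left.trans IH1).trans IH2

lemma goalVars_append {G1 G2 : List (Atom S)} :
    goalVars (G1 ++ G2) = goalVars G1 ∪ goalVars G2 := by
  ext x
  simp [goalVars, or_and_right, exists_or]

lemma opsem_goalVars {P coP : Set (Clause S)} {H : Set (Atom S)} {G : List (Atom S)}
    {E E' : Set (Eqn S)} (h : OpSem S P coP H G E E') : goalVars G ⊆ eqnVars E' := by
  induction h with
  | empty =>
      rintro x ⟨A, hA, _⟩
      simp at hA
  | @cohyp P coP H G1 G2 A B E1 E2 E3 _ _ hp _ h1 h2 IH1 IH2 =>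
      rintro x ⟨A', hA', hx⟩
      rw [List.mem_append, List.mem_cons] at hA'
      rcases hA' with h' | h' | h'
      · exact IH2 ⟨A', by simp [h'], hx⟩
      · subst h'
        have : x ∈ eqnVars (E1 ∪ atomEqs A' B) :=
          eqnVars_mono Set.subset_union_right (occurs_eqnVars_left hp hx)
        exact eqnVars_mono ((opsem_sub h1).trans (opsem_sub h2)) this
      · exact IH2 ⟨A', by simp [h'], hx⟩
  | @step P coP H G1 G2 A E1 E2 E3 C ρ _ _ hp _ h1 h2 IH1 IH2 =>
      rintro x ⟨A', hA', hx⟩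
      rw [List.mem_append, List.mem_cons] at hA'
      rcases hA' with h' | h' | h'
      · exact IH2 ⟨A', by simp [h'], hx⟩
      · subst h'
        have : x ∈ eqnVars (E1 ∪ atomEqs A' (C.head.subst ρ)) :=
          eqnVars_mono Set.subset_union_right (occurs_eqnVars_left (B := C.head.subst ρ) hp hx)
        exact eqnVars_mono ((opsem_sub h1).trans (opsem_sub h2)) this
      · exact IH2 ⟨A', by simp [h'], hx⟩
end
section
variable {S : FlexLP.Sig}
open FlexLP PFunctor

lemma groundInst_mono {P Q : Set (Clause S)} (h : P ⊆ Q) : GroundInst P ⊆ GroundInst Q := by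
  rintro r ⟨C, hC, σ, hσ⟩
  exact ⟨C, h hC, σ, hσ⟩

lemma Ind_isModel (P : Set (Clause S)) : IsModel P (Ind P) := by
  intro A hA
  rw [Ind, Set.mem_sInter]
  intro I hI
  apply hI
  obtain ⟨r, hr, h1, h2⟩ := hA
  exact ⟨r, hr, h1, fun B hB => Set.mem_sInter.mp (h2 B hB) I hI⟩

lemma loopInd_Ind {P' coP' : Set (Clause S)} {H : Set (Atom S)} {A : Atom S}
    (h : LoopInd P' coP' H A) : A ∈ Ind (P' ∪ coP') := by
  induction h with
  | hp _ h2 => exact h2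
  | rule r hr h1 _ IH =>
      exact Ind_isModel _ ⟨r, groundInst_mono Set.subset_union_left hr, h1, IH⟩

theorem main_aux {P coP : Set (Clause S)} {H : Set (Atom S)} {G : List (Atom S)}
    {E E' : Set (Eqn S)} (h : OpSem S P coP H G E E') :
    ∀ σ ∈ sol E', ∀ A ∈ G, LoopInd P coP ((fun B => B.subst σ) '' H) (A.subst σ) := by
  induction h with
  | empty =>
      intro σ _ A hA
      simp at hA
  | @cohyp P coP H G1 G2 A B E1 E2 E3 hco hB hp hsv h1 h2 IH1 IH2 =>
      intro σ hσ A' hA'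
      rw [List.mem_append, List.mem_cons] at hA'
      have hσ2 : σ ∈ sol E2 := sol_mono (opsem_sub h2) hσ
      rcases hA' with h' | h' | h'
      · exact IH2 σ hσ A' (by simp [h'])
      · subst h'
        have hsolved : σ ∈ sol (atomEqs A' B) :=
          sol_mono (Set.subset_union_right.trans (opsem_sub h1)) hσ2
        have hAB : A'.subst σ = B.subst σ := subst_eq_of_sol hp hsolved
        have hLoop : LoopInd (P ∪ coP) ∅
            ((fun B => B.subst σ) '' (∅ : Set (Atom S))) (A'.subst σ) :=
          IH1 σ hσ2 A' (by simp)
        have hInd : A'.subst σ ∈ Ind (P ∪ coP) := by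
          have := loopInd_Ind hLoop
          rwa [Set.union_empty] at this
        rw [hAB]
        exact LoopInd.hp ⟨B, hB, rfl⟩ (hAB ▸ hInd)
      · exact IH2 σ hσ A' (by simp [h'])
  | @step P coP H G1 G2 A E1 E2 E3 C ρ hC hfr hp hsv h1 h2 IH1 IH2 =>
      intro σ hσ A' hA'
      rw [List.mem_append, List.mem_cons] at hA'
      have hσ2 : σ ∈ sol E2 := sol_mono (opsem_sub h2) hσ
      rcases hA' with h' | h' | h'
      · exact IH2 σ hσ A' (by simp [h'])
      · subst h'
        have hσ1 : σ ∈ sol (E1 ∪ atomEqs A' (C.head.subst ρ)) := sol_mono (opsem_sub h1) hσ2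
        have hσeqs : σ ∈ sol (atomEqs A' (C.head.subst ρ)) :=
          sol_mono Set.subset_union_right hσ1
        have hE2dom : eqnVars E2 ⊆ σ.dom := hσ2.2.1
        have heqsE2 : eqnVars (atomEqs A' (C.head.subst ρ)) ⊆ σ.dom :=
          (eqnVars_mono (Set.subset_union_right.trans (opsem_sub h1))).trans hE2dom
        have hheadsubst : A'.subst σ = (C.head.subst ρ).subst σ :=
          subst_eq_of_sol (B := C.head.subst ρ) hp hσeqs
        set θ := substCompAux ρ σ with hθ
        have hkey : ∀ x, x ∈ clauseVars C →
            ∃ s, ρ.toFun x = some s ∧ θ.toFun x = some (Term.subst s σ) := by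
          intro x hx
          have hxdom : x ∈ ρ.dom := hfr.2.1 hx
          obtain ⟨t, ht⟩ := Option.isSome_iff_exists.mp hxdom
          obtain ⟨y, rfl, hy⟩ := hfr.1 x t ht
          have hydom : y ∈ σ.dom := by
            rcases hx with hxh | ⟨Bb, hBb, j, hxB⟩
            · obtain ⟨i, hi⟩ := hxh
              have hocc : Atom.Occurs y (C.head.subst ρ) := ⟨i, occurs_subst_of_var hi ht⟩
              exact heqsE2 (occurs_eqnVars_right (B := C.head.subst ρ) hp hocc)
            · have hocc : Atom.Occurs y (Bb.subst ρ) := ⟨j, occurs_subst_of_var hxB ht⟩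
              have hmem : y ∈ goalVars (C.body.map (fun B => B.subst ρ)) :=
                ⟨Bb.subst ρ, List.mem_map_of_mem hBb, hocc⟩
              exact hE2dom (opsem_goalVars h1 hmem)
          have hgr : Term.Ground S (Term.subst (Term.var S y) σ) := by
            obtain ⟨s, hs⟩ := Option.isSome_iff_exists.mp hydom
            rw [subst_var, hs, Option.getD_some]
            exact hσ.1 y s hs
          exact ⟨_, ht, substComp_some ht hgr⟩
        have hheadeq : (C.head.subst ρ).subst σ = C.head.subst θ :=
          atom_subst_subst C.finHead fun x hx => hkey x (Or.inl hx)
        have hbodyeq : ∀ Bb ∈ C.body, (Bb.subst ρ).subst σ = Bb.subst θ := fun Bb hBb =>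
          atom_subst_subst (C.finBody Bb hBb) fun x hx => hkey x (Or.inr ⟨Bb, hBb, hx⟩)
        have hAground : (A'.subst σ).Ground := by
          intro i
          apply ground_subst hσ.1
          intro x hx
          exact heqsE2 (occurs_eqnVars_left (B := C.head.subst ρ) hp ⟨i, hx⟩)
        have hgoaldom : goalVars (C.body.map (fun B => B.subst ρ)) ⊆ σ.dom :=
          (opsem_goalVars h1).trans hE2dom
        have hpremground : ∀ B' ∈ (C.body.map (fun B => B.subst ρ)).map (fun B => B.subst σ),
            B'.Ground := by
          intro B' hB'
          obtain ⟨B1, hB1, rfl⟩ := List.mem_map.mp hB'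
          intro i
          apply ground_subst hσ.1
          intro x hx
          exact hgoaldom ⟨B1, hB1, i, hx⟩
        refine LoopInd.rule (A'.subst σ, (C.body.map (fun B => B.subst ρ)).map
          (fun B => B.subst σ)) ?_ rfl ?_
        · refine ⟨C, hC, θ, substComp_ground ρ σ, hheadsubst.trans hheadeq, ?_, hAground,
            hpremground⟩
          show _ = C.body.map (fun B => B.subst θ)
          rw [List.map_map]
          exact List.map_congr_left fun Bb hBb => hbodyeq Bb hBb
        · intro B' hB'
          obtain ⟨B1, hB1, rfl⟩ := List.mem_map.mp hB'
          have := IH1 σ hσ2 B1 hB1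
          rwa [Set.image_union, Set.image_singleton] at this
      · exact IH2 σ hσ A' (by simp [h'])
end

/-- Soundness w.r.t. the inductive characterization of regular semantics: if resolution of
`⟨A1,...,An | E⟩` under coinductive hypotheses `H` succeeds with output `E'`, then for every
solution `σ` of `E'` and every atom `Ai` of the goal, `Hσ ⊢ Aiσ` is derivable in `Loop(P,coP)`. -/
theorem soundness_wrt_loop (S : Sig) (P coP : Set (Clause S))
    (hP : P.Finite) (hcoP : coP.Finite)
    (H : Set (Atom S)) (hHfin : H.Finite) (hHsyn : ∀ B ∈ H, B.IsFinite)
    (G : List (Atom S)) (hG : ∀ A ∈ G, A.IsFinite)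
    (E E' : Set (Eqn S)) (hE : EqnSetFin E)
    (hvars : atomsVars H ⊆ eqnVars E)
    (h : OpSem S P coP H G E E')
    (σ : Subst S) (hσ : σ ∈ sol E')
    (A : Atom S) (hA : A ∈ G) :
    LoopInd P coP ((fun B => B.subst σ) '' H) (A.subst σ) :=
  main_aux h σ hσ A hA

end FlexLP
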